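/- If A is a quasi-double B̄-tensor, then every principal subtensor A[α] is a quasi-double B̄-tensor, for any nonempty subset α of indices with |α| ≥ 2. -/
import Mathlib


open Finset

section TensorDefs

variable {ι : Type*} [Fintype ι] [DecidableEq ι] {k : ℕ}

/-- diagonal entry `a_{i…i}` of an `(k+1)`-order tensor given by its row slices -/
def diagT (A : ι → (Fin k → ι) → ℝ) (i : ι) : ℝ := A i (fun _ => i)

/-- the off-diagonal multi-indices of row `i` -/
def offT (k : ℕ) (i : ι) : Finset (Fin k → ι) :=
  Finset.univ.filter (fun t => t ≠ (fun _ => i))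

/-- the multi-indices different from `(i,…,i)` and `(j,…,j)` -/
def offT2 (k : ℕ) (i j : ι) : Finset (Fin k → ι) :=
  Finset.univ.filter (fun t => t ≠ (fun _ => i) ∧ t ≠ (fun _ => j))

/-- `r_i(A)` -/
def rT (A : ι → (Fin k → ι) → ℝ) (i : ι) : ℝ := ∑ t ∈ offT k i, |A i t|

/-- `r_j^i(A)` -/
def rT2 (A : ι → (Fin k → ι) → ℝ) (j i : ι) : ℝ := ∑ t ∈ offT2 k i j, |A j t|

/-- `β_i(A) = max{0, off-diagonal entries of row i}` -/
noncomputable def betaT (A : ι → (Fin k → ι) → ℝ) (i : ι) : ℝ :=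
  (insert (0:ℝ) ((offT k i).image (A i))).max' (Finset.insert_nonempty _ _)

/-- `γ_i(A) = min{0, off-diagonal entries of row i}` -/
noncomputable def gammaT (A : ι → (Fin k → ι) → ℝ) (i : ι) : ℝ :=
  (insert (0:ℝ) ((offT k i).image (A i))).min' (Finset.insert_nonempty _ _)

/-- `Δ_i(A)` -/
noncomputable def deltaT (A : ι → (Fin k → ι) → ℝ) (i : ι) : ℝ :=
  ∑ t ∈ offT k i, (betaT A i - A i t)

/-- `Θ_i(A)` -/
noncomputable def thetaT (A : ι → (Fin k → ι) → ℝ) (i : ι) : ℝ :=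
  ∑ t ∈ offT k i, (A i t - gammaT A i)

/-- `Δ_j^i(A)` -/
noncomputable def deltaT2 (A : ι → (Fin k → ι) → ℝ) (j i : ι) : ℝ :=
  ∑ t ∈ offT2 k i j, (betaT A j - A j t)

/-- `Θ_j^i(A)` -/
noncomputable def thetaT2 (A : ι → (Fin k → ι) → ℝ) (j i : ι) : ℝ :=
  ∑ t ∈ offT2 k i j, (A j t - gammaT A j)

/-- `Ā`: the `k`-th row tensor of `A` multiplied by `sign(a_{k…k})` -/
noncomputable def barT (A : ι → (Fin k → ι) → ℝ) : ι → (Fin k → ι) → ℝ :=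
  fun i t => Real.sign (diagT A i) * A i t

/-- double `B`-tensor -/
def DoubleB (A : ι → (Fin k → ι) → ℝ) : Prop :=
  (∀ i, betaT A i < diagT A i) ∧
  (∀ i, deltaT A i ≤ diagT A i - betaT A i) ∧
  (∀ i j, i ≠ j → deltaT A i * deltaT A j <
    (diagT A i - betaT A i) * (diagT A j - betaT A j))

/-- quasi-double `B`-tensor -/
def QuasiDoubleB (A : ι → (Fin k → ι) → ℝ) : Prop :=
  (∀ i, betaT A i < diagT A i) ∧
  ∀ i j, i ≠ j → (betaT A i - A j (fun _ => i)) * deltaT A j <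
    (diagT A i - betaT A i) * (diagT A j - betaT A j - deltaT2 A j i)

/-- symmetric tensor of order `k+1` (row form) -/
def SymT (A : ι → (Fin k → ι) → ℝ) : Prop :=
  ∀ σ : Equiv.Perm (Fin (k+1)), ∀ t : Fin (k+1) → ι,
    A ((t ∘ σ) 0) (Fin.tail (t ∘ σ)) = A (t 0) (Fin.tail t)

end TensorDefs

section Aux

variable {ι κ : Type*} [Fintype ι] [DecidableEq ι] [Fintype κ] [DecidableEq κ] {k : ℕ}

lemma betaT_nonneg (B : ι → (Fin k → ι) → ℝ) (i : ι) : 0 ≤ betaT B i :=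
  Finset.le_max' _ _ (Finset.mem_insert_self _ _)

lemma le_betaT (B : ι → (Fin k → ι) → ℝ) {i : ι} {t : Fin k → ι} (ht : t ∈ offT k i) :
    B i t ≤ betaT B i :=
  Finset.le_max' _ _ (Finset.mem_insert_of_mem (Finset.mem_image_of_mem _ ht))

lemma deltaT_nonneg (B : ι → (Fin k → ι) → ℝ) (i : ι) : 0 ≤ deltaT B i :=
  Finset.sum_nonneg fun t ht => by linarith [le_betaT B ht]

lemma offT2_subset (i j : ι) : offT2 k i j ⊆ offT k j := by
  intro t ht
  simp only [offT2, Finset.mem_filter, Finset.mem_univ, true_and] at ht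
  simp only [offT, Finset.mem_filter, Finset.mem_univ, true_and]
  exact ht.2

lemma offT_eq_insert (hk : 0 < k) {i j : ι} (hij : i ≠ j) :
    offT k j = insert (fun _ => i : Fin k → ι) (offT2 k i j) := by
  ext t
  simp only [offT, offT2, Finset.mem_filter, Finset.mem_univ, true_and, Finset.mem_insert]
  constructor
  · intro h
    by_cases hti : t = fun _ => i
    · exact Or.inl hti
    · exact Or.inr ⟨hti, h⟩
  · rintro (rfl | ⟨h1, h2⟩)
    · intro hcon; exact hij (congrFun hcon ⟨0, hk⟩)
    · exact h2

lemma const_notMem_offT2 {i j : ι} :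
    (fun _ => i : Fin k → ι) ∉ offT2 k i j := by
  simp [offT2]

lemma deltaT_decomp (hk : 0 < k) (B : ι → (Fin k → ι) → ℝ) {i j : ι} (hij : i ≠ j) :
    deltaT B j = (betaT B j - B j (fun _ => i)) + deltaT2 B j i := by
  unfold deltaT deltaT2
  rw [offT_eq_insert hk hij, Finset.sum_insert const_notMem_offT2]

lemma const_mem_offT (hk : 0 < k) {i j : ι} (hij : i ≠ j) :
    (fun _ => i : Fin k → ι) ∈ offT k j := by
  simp only [offT, Finset.mem_filter, Finset.mem_univ, true_and]
  intro hcon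
  exact hij (congrFun hcon ⟨0, hk⟩)

lemma map_mem_offT {e : κ → ι} (he : Function.Injective e) {i : κ} {t : Fin k → κ}
    (ht : t ∈ offT k i) : (fun s => e (t s)) ∈ offT k (e i) := by
  simp only [offT, Finset.mem_filter, Finset.mem_univ, true_and] at *
  intro hcon
  exact ht (funext fun s => he (congrFun hcon s))

lemma map_mem_offT2 {e : κ → ι} (he : Function.Injective e) {i j : κ} {t : Fin k → κ}
    (ht : t ∈ offT2 k i j) : (fun s => e (t s)) ∈ offT2 k (e i) (e j) := by
  simp only [offT2, Finset.mem_filter, Finset.mem_univ, true_and] at *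
  exact ⟨fun hcon => ht.1 (funext fun s => he (congrFun hcon s)),
         fun hcon => ht.2 (funext fun s => he (congrFun hcon s))⟩

lemma betaT_restrict_le {e : κ → ι} (he : Function.Injective e)
    (B : ι → (Fin k → ι) → ℝ) (i : κ) :
    betaT (fun a t => B (e a) (fun s => e (t s))) i ≤ betaT B (e i) := by
  apply Finset.max'_le
  intro y hy
  rcases Finset.mem_insert.1 hy with h0 | hmem
  · exact h0 ▸ betaT_nonneg B (e i)
  · obtain ⟨t, ht, rfl⟩ := Finset.mem_image.1 hmem
    exact le_betaT B (map_mem_offT he ht)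

lemma deltaT2_restrict_le {e : κ → ι} (he : Function.Injective e)
    (B : ι → (Fin k → ι) → ℝ) (i j : κ) :
    deltaT2 (fun a t => B (e a) (fun s => e (t s))) j i ≤ deltaT2 B (e j) (e i) := by
  have hmapinj : ∀ x ∈ offT2 k i j, ∀ y ∈ offT2 k i j,
      (fun s => e (x s)) = (fun s => e (y s)) → x = y := by
    intro x _ y _ h
    funext s
    exact he (congrFun h s)
  calc deltaT2 (fun a t => B (e a) (fun s => e (t s))) j i
      ≤ ∑ t ∈ offT2 k i j, (betaT B (e j) - B (e j) (fun s => e (t s))) := by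
        apply Finset.sum_le_sum
        intro t _
        have := betaT_restrict_le he B j
        simp only [sub_le_sub_iff_right]
        exact this
    _ = ∑ u ∈ (offT2 k i j).image (fun t s => e (t s)),
          (betaT B (e j) - B (e j) u) :=
        (Finset.sum_image (f := fun u => betaT B (e j) - B (e j) u) hmapinj).symm
    _ ≤ deltaT2 B (e j) (e i) := by
        apply Finset.sum_le_sum_of_subset_of_nonneg
        · intro u hu
          obtain ⟨t, ht, rfl⟩ := Finset.mem_image.1 hu
          exact map_mem_offT2 he ht
        · intro u hu _
          have : B (e j) u ≤ betaT B (e j) := le_betaT B (offT2_subset _ _ hu)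
          linarith

lemma offT_zero (i : ι) : offT 0 i = (∅ : Finset (Fin 0 → ι)) := by
  apply Finset.eq_empty_of_forall_notMem
  intro t ht
  simp only [offT, Finset.mem_filter, Finset.mem_univ, true_and] at ht
  exact ht (funext fun s => s.elim0)

lemma offT2_zero (i j : ι) : offT2 0 i j = (∅ : Finset (Fin 0 → ι)) :=
  Finset.eq_empty_of_forall_notMem fun t ht =>
    (Finset.notMem_empty t) ((offT_zero j) ▸ offT2_subset i j ht)

lemma betaT_zero (B : ι → (Fin 0 → ι) → ℝ) (i : ι) : betaT B i = 0 := by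
  refine le_antisymm ?_ (betaT_nonneg B i)
  apply Finset.max'_le
  intro y hy
  rcases Finset.mem_insert.1 hy with h0 | hm
  · exact le_of_eq h0
  · rw [offT_zero, Finset.image_empty] at hm
    exact absurd hm (Finset.notMem_empty y)

lemma arith (di dj bi bj b'i b'j c D2 D2' D' : ℝ)
    (hbii : bi < di) (hbjj : bj < dj) (hsi : b'i ≤ bi) (hsj : b'j ≤ bj)
    (hE : D2' ≤ D2) (hcb : c ≤ bj)
    (hD' : D' = (b'j - c) + D2') (hD'0 : 0 ≤ D')
    (hknown : (bi - c) * ((bj - c) + D2) < (di - bi) * (dj - bj - D2)) :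
    (b'i - c) * D' < (di - b'i) * (dj - b'j - D2') := by
  rcases le_or_gt c di with hcase | hcase
  · nlinarith [mul_nonneg (sub_nonneg.2 hsi) (by linarith : (0:ℝ) ≤ dj - c),
      mul_nonneg (sub_nonneg.2 hsj) (sub_nonneg.2 hcase),
      mul_nonneg (sub_nonneg.2 hE) (sub_nonneg.2 hcase)]
  · nlinarith [mul_pos (by linarith : (0:ℝ) < di - b'i) (by linarith : (0:ℝ) < dj - c),
      mul_nonneg (by linarith : (0:ℝ) ≤ c - di) hD'0]

lemma quasi_restrict {e : κ → ι} (he : Function.Injective e)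
    (B : ι → (Fin k → ι) → ℝ) (h : QuasiDoubleB B) :
    QuasiDoubleB (fun a t => B (e a) (fun s => e (t s))) := by
  set B' : κ → (Fin k → κ) → ℝ := fun a t => B (e a) (fun s => e (t s)) with hB'
  have hdiag : ∀ a : κ, diagT B' a = diagT B (e a) := fun a => rfl
  rcases Nat.eq_zero_or_pos k with hk | hk
  · subst hk
    constructor
    · intro a
      rw [betaT_zero, hdiag]
      have := h.1 (e a)
      rwa [betaT_zero] at this
    · intro a b hab
      rw [betaT_zero, betaT_zero, hdiag, hdiag]
      have hda := h.1 (e a); have hdb := h.1 (e b)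
      rw [betaT_zero] at hda hdb
      have hd1 : deltaT B' b = 0 := by
        unfold deltaT; rw [offT_zero, Finset.sum_empty]
      have hd2 : deltaT2 B' b a = 0 := by
        unfold deltaT2; rw [offT2_zero, Finset.sum_empty]
      rw [hd1, hd2]
      nlinarith
  · have hfirst : ∀ a : κ, betaT B' a < diagT B' a := by
      intro a
      rw [hdiag]
      exact lt_of_le_of_lt (betaT_restrict_le he B a) (h.1 (e a))
    refine ⟨hfirst, ?_⟩
    intro i j hij
    have hij' : e i ≠ e j := fun hcon => hij (he hcon)
    have hD' : deltaT B' j = (betaT B' j - B (e j) (fun _ => e i)) + deltaT2 B' j i :=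
      deltaT_decomp hk B' hij
    have hknown : (betaT B (e i) - B (e j) (fun _ => e i)) *
        ((betaT B (e j) - B (e j) (fun _ => e i)) + deltaT2 B (e j) (e i)) <
        (diagT B (e i) - betaT B (e i)) *
        (diagT B (e j) - betaT B (e j) - deltaT2 B (e j) (e i)) := by
      have := h.2 (e i) (e j) hij'
      rwa [deltaT_decomp hk B hij'] at this
    exact arith (diagT B (e i)) (diagT B (e j)) (betaT B (e i)) (betaT B (e j))
      (betaT B' i) (betaT B' j) (B (e j) (fun _ => e i))
      (deltaT2 B (e j) (e i)) (deltaT2 B' j i) (deltaT B' j)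
      (h.1 (e i)) (h.1 (e j)) (betaT_restrict_le he B i) (betaT_restrict_le he B j)
      (deltaT2_restrict_le he B i j) (le_betaT B (const_mem_offT hk hij'))
      hD' (deltaT_nonneg B' j) hknown

end Aux

/-- Principal subtensors of quasi-double `B̄`-tensors are quasi-double `B̄`-tensors. -/
theorem stmt10 {n k : ℕ} (A : Fin n → (Fin k → Fin n) → ℝ) (h : QuasiDoubleB (barT A))
    (α : Finset (Fin n)) (hα : 2 ≤ α.card) :
    QuasiDoubleB (barT (fun (i : {x // x ∈ α}) (t : Fin k → {x // x ∈ α}) =>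
      A i.val (fun s => (t s).val))) := by
  exact quasi_restrict (e := (Subtype.val : {x // x ∈ α} → Fin n))
    Subtype.val_injective (barT A) h
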